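/- Let w be a Fink–Mao region word. Then under the reductions of the Reduction Lemma, w reduces to a normal form that is either the empty word or a word of the form [L] ++ u ++ [C, x] with x ∈ {L, R}. Moreover, if w has length k then its normal form has length at most k − 1. -/

import Mathlib

/-- A region of the tie diagram: left, right, or center. -/
inductive Region : Type
  | L | R | C
deriving DecidableEq

open Region

/-- A Fink–Mao region word: a list of letters from {L, R, C} with consecutive
letters distinct, first letter `L`, ending with the suffix `L,R,C` or `R,L,C`. -/
def FMWord (w : List Region) : Prop :=
  w.Chain' (· ≠ ·) ∧ w.head? = some L ∧
    ([L, R, C] <:+ w ∨ [R, L, C] <:+ w)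

/-- Swap `L` and `R` (fixing `C`). -/
def other : Region → Region
  | L => R
  | R => L
  | C => C

/-- `altWord s n` is the alternating word of length `n` starting with letter `s`. -/
def altWord : Region → ℕ → List Region
  | _, 0 => []
  | s, n + 1 => s :: altWord (other s) n

/-- One step of the reductions 0–IV of the Reduction Lemma, on region words. -/
inductive Red : List Region → List Region → Prop
  | red0 : Red [L, R, C] []
  | red1 (w : List Region) (X Y t : Region) :
      ((X = L ∧ Y = R) ∨ (X = R ∧ Y = L)) → (t = L ∨ t = R) →
      Red (w ++ [X, Y, X, C]) (w ++ [X, C, t])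
  | red2 (w : List Region) (X Y : Region) :
      ((X = L ∧ Y = R) ∨ (X = R ∧ Y = L)) → Red (w ++ [C, X, Y, C]) w
  | red3 (s : Region) (n : ℕ) : (s = L ∨ s = R) → Red (altWord s (n + 1)) []
  | red4 (w : List Region) (s : Region) (n : ℕ) :
      (s = L ∨ s = R) → Red (w ++ [C] ++ altWord s (n + 2)) (w ++ [C, s])

-- auxiliary lemmas
lemma noC_ne (s a : Region) (hs : s ≠ C) (ha : a ≠ C) (h : a ≠ s) : a = other s := by
  cases s <;> cases a <;> simp_all [other]

lemma chain_alt : ∀ (f : List Region) (s : Region), f.Chain' (· ≠ ·) → (∀ a ∈ f, a ≠ C) →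
    f.head? = some s → f = altWord s f.length
  | [], s, _, _, h => by simp at h
  | [a], s, _, hC, h => by
      simp at h; subst h; simp [altWord]
  | a :: b :: l, s, hc, hC, h => by
      simp at h; subst h
      have hab : a ≠ b := (List.isChain_cons_cons.mp hc).1
      have hb : b = other a := noC_ne _ _ (hC _ (by simp)) (hC _ (by simp)) hab.symm
      have ih := chain_alt (b :: l) (other a) (List.isChain_cons_cons.mp hc).2
        (fun x hx => hC x (by simp [hx])) (by simp [hb])
      show a :: (b :: l) = altWord a ((b :: l).length + 1)
      rw [altWord, ← ih]

lemma split_lastC : ∀ v : List Region, ∃ u f : List Region,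
    v = u ++ f ∧ (∀ a ∈ f, a ≠ C) ∧ (u = [] ∨ ∃ u', u = u' ++ [C])
  | [] => ⟨[], [], by simp⟩
  | a :: v => by
      obtain ⟨u, f, rfl, hf, hu⟩ := split_lastC v
      rcases hu with rfl | ⟨u', rfl⟩
      · by_cases ha : a = C
        · exact ⟨[a], f, by simp, hf, Or.inr ⟨[], by simp [ha]⟩⟩
        · exact ⟨[], a :: f, by simp, by
            intro x hx
            rcases List.mem_cons.mp hx with rfl | hx
            · exact ha
            · exact hf x hx, Or.inl rfl⟩
      · exact ⟨a :: (u' ++ [C]), f, by simp, hf, Or.inr ⟨a :: u', by simp⟩⟩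

/-- Key lemma: a chain word starting with L and not ending with C reduces to normal form. -/
lemma reduceTail (v : List Region) (hc : v.Chain' (· ≠ ·)) (hh : v.head? = some L)
    (hl : v.getLast? ≠ some C) :
    ∃ n, Relation.ReflTransGen Red v n ∧
      (n = [] ∨ ∃ (u : List Region) (x : Region), (x = L ∨ x = R) ∧ n = L :: (u ++ [C, x])) ∧
      n.length ≤ v.length := by
  obtain ⟨u, f, rfl, hf, hu⟩ := split_lastC v
  -- f is nonempty
  have hfne : f ≠ [] := by
    rintro rfl
    rcases hu with rfl | ⟨u', rfl⟩
    · simp at hh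
    · simp at hl
  obtain ⟨s, f', rfl⟩ := List.exists_cons_of_ne_nil hfne
  have hsC : s ≠ C := hf s (by simp)
  have hsLR : s = L ∨ s = R := by cases s <;> simp_all
  have hfchain : (s :: f').Chain' (· ≠ ·) := hc.suffix ⟨u, rfl⟩
  have halt : s :: f' = altWord s (s :: f').length := chain_alt _ s hfchain hf (by simp)
  rcases hu with rfl | ⟨u', rfl⟩
  · -- v = f, alternating starting with L; red3 to []
    simp only [List.nil_append] at *
    have hsL : s = L := by simpa using hh
    refine ⟨[], Relation.ReflTransGen.single ?_, Or.inl rfl, by simp⟩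
    have := Red.red3 s f'.length hsLR
    rwa [← List.length_cons (a := s) (as := f'), ← halt] at this
  · -- u = u' ++ [C]
    have hu'ne : u' ≠ [] := by
      rintro rfl; simp at hh
    obtain ⟨h, u'', rfl⟩ := List.exists_cons_of_ne_nil hu'ne
    have hhL : h = L := by simpa using hh
    subst hhL
    rcases f' with _ | ⟨b, f''⟩
    · -- word is already in normal form
      exact ⟨(L :: u'') ++ [C] ++ [s], Relation.ReflTransGen.refl,
        Or.inr ⟨u'', s, hsLR, by simp⟩, le_refl _⟩
    · -- red4
      have hred := Red.red4 (L :: u'') s f''.length hsLR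
      have hlen : (s :: b :: f'').length = f''.length + 2 := by simp
      rw [← hlen, ← halt] at hred
      refine ⟨(L :: u'') ++ [C, s], Relation.ReflTransGen.single (by simpa using hred),
        Or.inr ⟨u'', s, hsLR, by simp⟩, by simp⟩


/-- Every Fink–Mao region word reduces to a normal form that is either empty or of
the form `[L] ++ u ++ [C, x]` with `x ∈ {L, R}`; if the word has length `k`, the
normal form has length at most `k - 1`. -/
theorem reduce_to_normal_form (w : List Region) (hw : FMWord w) :
    ∃ v : List Region, Relation.ReflTransGen Red w v ∧
      (v = [] ∨ ∃ (u : List Region) (x : Region), (x = L ∨ x = R) ∧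
        v = L :: (u ++ [C, x])) ∧
      v.length ≤ w.length - 1 := by
  obtain ⟨hc, hh, hsuf⟩ := hw
  rcases hsuf with ⟨p, rfl⟩ | ⟨p, rfl⟩
  · -- suffix [L, R, C]
    rcases p.eq_nil_or_concat with rfl | ⟨q, a, rfl⟩
    · exact ⟨[], Relation.ReflTransGen.single Red.red0, Or.inl rfl, by simp⟩
    · have haL : a ≠ L := by
        have := (List.isChain_append.mp hc).2.2 a (by simp) L (by simp)
        exact this
      cases a with
      | L => exact absurd rfl haL
      | R =>
        -- w = q ++ [R, L, R, C], red1
        have hqne : q ≠ [] := by rintro rfl; simp at hh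
        obtain ⟨h, q', rfl⟩ := List.exists_cons_of_ne_nil hqne
        have : h = L := by simpa using hh
        subst this
        have hred := Red.red1 (L :: q') R L R (Or.inr ⟨rfl, rfl⟩) (Or.inr rfl)
        refine ⟨(L :: q') ++ [R, C, R], Relation.ReflTransGen.single (by simpa using hred),
          Or.inr ⟨q' ++ [R], R, Or.inr rfl, by simp⟩, by simp⟩
      | C =>
        -- w = q ++ [C, L, R, C], red2 then reduceTail
        have hqne : q ≠ [] := by rintro rfl; simp at hh
        have hqh : q.head? = some L := by
          rwa [List.concat_eq_append, List.append_assoc, List.head?_append_of_ne_nil _ hqne] at hh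
        have hql : q.getLast? ≠ some C := by
          intro hq
          have := (List.isChain_append.mp (by simpa [List.append_assoc] using hc :
            (q ++ ([C] ++ [L, R, C])).Chain' (· ≠ ·))).2.2 C (by simpa using hq) C (by simp)
          exact this rfl
        have hqc : q.Chain' (· ≠ ·) := hc.prefix ⟨[C, L, R, C], by simp⟩
        obtain ⟨n, hred, hnorm, hlen⟩ := reduceTail q hqc hqh hql
        have hstep : Red (q ++ [C] ++ [L, R, C]) q := by
          simpa using Red.red2 q L R (Or.inl ⟨rfl, rfl⟩)
        refine ⟨n, Relation.ReflTransGen.head (by simpa [List.append_assoc] using hstep) hred,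
          hnorm, by simp; omega⟩
  · -- suffix [R, L, C]
    rcases p.eq_nil_or_concat with rfl | ⟨q, a, rfl⟩
    · simp at hh
    · have haR : a ≠ R := by
        have := (List.isChain_append.mp hc).2.2 a (by simp) R (by simp)
        exact this
      cases a with
      | R => exact absurd rfl haR
      | L =>
        -- w = q ++ [L, R, L, C], red1
        have hred := Red.red1 q L R L (Or.inl ⟨rfl, rfl⟩) (Or.inl rfl)
        rcases q with _ | ⟨h, q'⟩
        · exact ⟨[L, C, L], Relation.ReflTransGen.single (by simpa using hred),
            Or.inr ⟨[], L, Or.inl rfl, by simp⟩, by simp⟩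
        · have : h = L := by simpa using hh
          subst this
          refine ⟨(L :: q') ++ [L, C, L], Relation.ReflTransGen.single (by simpa using hred),
            Or.inr ⟨q' ++ [L], L, Or.inl rfl, by simp⟩, by simp⟩
      | C =>
        have hqne : q ≠ [] := by rintro rfl; simp at hh
        have hqh : q.head? = some L := by
          rwa [List.concat_eq_append, List.append_assoc, List.head?_append_of_ne_nil _ hqne] at hh
        have hql : q.getLast? ≠ some C := by
          intro hq
          have := (List.isChain_append.mp (by simpa [List.append_assoc] using hc :
            (q ++ ([C] ++ [R, L, C])).Chain' (· ≠ ·))).2.2 C (by simpa using hq) C (by simp)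
          exact this rfl
        have hqc : q.Chain' (· ≠ ·) := hc.prefix ⟨[C, R, L, C], by simp⟩
        obtain ⟨n, hred, hnorm, hlen⟩ := reduceTail q hqc hqh hql
        have hstep : Red (q ++ [C] ++ [R, L, C]) q := by
          simpa using Red.red2 q R L (Or.inr ⟨rfl, rfl⟩)
        refine ⟨n, Relation.ReflTransGen.head (by simpa [List.append_assoc] using hstep) hred,
          hnorm, by simp; omega⟩
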